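/- arXiv:1302.2857 — 11 statements merged into one kernel-verified Lean document; each statement's English description precedes it below -/
import Mathlib

section
/- Let F and G be skew-symmetric A-linear endomorphisms of E such that F∘G + G∘F = λ·id_E for some λ ∈ ℝ. Then the Nijenhuis concomitant N(F,G) is totally skew-symmetric with respect to the pairing: for all U, V, W ∈ E, N(F,G)(U,V) + N(F,G)(V,U) = 0 and ⟨N(F,G)(U,V), W⟩ + ⟨N(F,G)(U,W), V⟩ = 0. -/
open scoped TensorProduct
section BC

variable {M N P : Type} [AddCommGroup M] [Module ℝ M] [AddCommGroup N] [Module ℝ N]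
  [AddCommGroup P] [Module ℝ P]

/-- Complex-bilinear extension of an `ℝ`-bilinear map to the complexifications. -/
noncomputable def bcBilin (B : M →ₗ[ℝ] N →ₗ[ℝ] P) :
    ℂ ⊗[ℝ] M →ₗ[ℂ] ℂ ⊗[ℝ] N →ₗ[ℂ] ℂ ⊗[ℝ] P :=
  LinearMap.liftBaseChange ℂ ((LinearMap.baseChangeHom ℝ ℂ N P) ∘ₗ B)

/-- Complex conjugation on the complexification `ℂ ⊗[ℝ] M`. -/
noncomputable def conjT (M : Type) [AddCommGroup M] [Module ℝ M] :
    ℂ ⊗[ℝ] M →ₗ[ℝ] ℂ ⊗[ℝ] M :=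
  TensorProduct.map Complex.conjAe.toLinearMap LinearMap.id

/-- The `i`-eigenspace of a `ℂ`-linear endomorphism of `ℂ ⊗[ℝ] M`. -/
def eigP (Jc : ℂ ⊗[ℝ] M →ₗ[ℂ] ℂ ⊗[ℝ] M) : Set (ℂ ⊗[ℝ] M) :=
  {e | Jc e = Complex.I • e}

/-- The `-i`-eigenspace of a `ℂ`-linear endomorphism of `ℂ ⊗[ℝ] M`. -/
def eigM (Jc : ℂ ⊗[ℝ] M →ₗ[ℂ] ℂ ⊗[ℝ] M) : Set (ℂ ⊗[ℝ] M) :=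
  {e | Jc e = -(Complex.I • e)}

end BC

/-- An (algebraic) Courant algebroid: a commutative `ℝ`-algebra `A`, an `A`-module `E`,
a nondegenerate symmetric `A`-bilinear pairing, an anchor with values in `ℝ`-linear
derivations of `A`, a map `Dm : A → E`, and an `ℝ`-bilinear Dorfman bracket. -/
structure CourantAlgebroid (A E : Type) [CommRing A] [Algebra ℝ A]
    [AddCommGroup E] [Module ℝ E] [Module A E] [IsScalarTower ℝ A E] : Type where
  pair : E →ₗ[A] E →ₗ[A] A
  pair_symm : ∀ x y, pair x y = pair y x
  pair_nondeg : ∀ x, (∀ y, pair x y = 0) → x = 0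
  anchor : E →ₗ[A] Derivation ℝ A A
  Dm : A →ₗ[ℝ] E
  pair_Dm : ∀ (f : A) (x : E), pair (Dm f) x = (1/2 : ℝ) • anchor x f
  brac : E →ₗ[ℝ] E →ₗ[ℝ] E
  brac_leibniz : ∀ x y z, brac x (brac y z) = brac (brac x y) z + brac y (brac x z)
  anchor_brac : ∀ (x y : E) (f : A),
    anchor (brac x y) f = anchor x (anchor y f) - anchor y (anchor x f)
  brac_smul : ∀ (f : A) (x y : E), brac x (f • y) = anchor x f • y + f • brac x y
  brac_add_swap : ∀ x y, brac x y + brac y x = (2 : ℝ) • Dm (pair x y)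
  Dm_brac : ∀ (f : A) (x : E), brac (Dm f) x = 0
  anchor_pair : ∀ x y z, anchor x (pair y z) = pair (brac x y) z + pair y (brac x z)

namespace CourantAlgebroid

variable {A E : Type} [CommRing A] [Algebra ℝ A]
    [AddCommGroup E] [Module ℝ E] [Module A E] [IsScalarTower ℝ A E]

/-- The Nijenhuis concomitant of two operators with respect to a bracket. -/
def nijGen {M : Type*} [AddCommGroup M] (br : M → M → M) (F G : M → M) (U V : M) : M :=
  br (F U) (G V) - F (br U (G V)) - G (br (F U) V) + F (G (br U V))
    + br (G U) (F V) - G (br U (F V)) - F (br (G U) V) + G (F (br U V))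

/-- The Nijenhuis concomitant `N(F,G)` of two `A`-linear endomorphisms of `E`. -/
def nij (C : CourantAlgebroid A E) (F G : E →ₗ[A] E) (U V : E) : E :=
  nijGen (fun x y => C.brac x y) (fun e => F e) (fun e => G e) U V

/-- An almost complex structure: an orthogonal endomorphism squaring to `-1`. -/
def IsAlmostComplexStr (C : CourantAlgebroid A E) (J : E →ₗ[A] E) : Prop :=
  (∀ e, J (J e) = -e) ∧ ∀ x y, C.pair (J x) (J y) = C.pair x y

/-- A complex structure: an almost complex structure with vanishing Nijenhuis concomitant. -/
def IsComplexStr (C : CourantAlgebroid A E) (J : E →ₗ[A] E) : Prop :=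
  C.IsAlmostComplexStr J ∧ ∀ U V, C.nij J J U V = 0

/-- An almost hypercomplex structure: a triple of almost complex structures
satisfying the quaternionic relations. -/
def IsAlmostHypercomplex (C : CourantAlgebroid A E) (I J K : E →ₗ[A] E) : Prop :=
  C.IsAlmostComplexStr I ∧ C.IsAlmostComplexStr J ∧ C.IsAlmostComplexStr K ∧
    ∀ e, I (J (K e)) = -e

/-- A hypercomplex structure: an almost hypercomplex structure all of whose six
Nijenhuis concomitants vanish. -/
def IsHypercomplex (C : CourantAlgebroid A E) (I J K : E →ₗ[A] E) : Prop :=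
  C.IsAlmostHypercomplex I J K ∧
    (∀ U V, C.nij I I U V = 0) ∧ (∀ U V, C.nij I J U V = 0) ∧ (∀ U V, C.nij I K U V = 0) ∧
    (∀ U V, C.nij J J U V = 0) ∧ (∀ U V, C.nij J K U V = 0) ∧ (∀ U V, C.nij K K U V = 0)

/-- The Poisson-type bracket on `A` induced by a skew-symmetric endomorphism `F`. -/
def pb (C : CourantAlgebroid A E) (F : E →ₗ[A] E) (f g : A) : A :=
  C.pair (F (C.Dm f)) (C.Dm g)

/-- `Δ_f(U,V)` associated with an almost hypercomplex triple. -/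
def Delta (C : CourantAlgebroid A E) (I J K : E →ₗ[A] E) (f : A) (U V : E) : E :=
  C.pair U V • C.Dm f + C.pair (I U) V • I (C.Dm f) + C.pair (J U) V • J (C.Dm f)
    + C.pair (K U) V • K (C.Dm f)

/-- A hypercomplex connection relative to an almost hypercomplex triple. -/
def IsHConn (C : CourantAlgebroid A E) (I J K : E →ₗ[A] E)
    (conn : E →ₗ[ℝ] E →ₗ[ℝ] E) : Prop :=
  (∀ (f : A) (U V : E), conn (f • U) V = f • conn U V) ∧
  (∀ (f : A) (U V : E),
    conn U (f • V) = C.anchor U f • V + f • conn U V - C.Delta I J K f U V)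

/-- The torsion of an `ℝ`-bilinear connection. -/
noncomputable def torsion (C : CourantAlgebroid A E) (conn : E →ₗ[ℝ] E →ₗ[ℝ] E) (U V : E) : E :=
  conn U V - conn V U - (1/2 : ℝ) • (C.brac U V - C.brac V U)

/-- The canonical hypercomplex connection. -/
noncomputable def hconn (C : CourantAlgebroid A E) (I J K : E →ₗ[A] E) (U V : E) : E :=
  -((1/2 : ℝ) • K (C.brac (J V) (I U) - J (C.brac V (I U)) - I (C.brac (J V) U)
      + J (I (C.brac V U))))

/-- The pairing as an `ℝ`-bilinear map. -/
noncomputable def pairR (C : CourantAlgebroid A E) : E →ₗ[ℝ] E →ₗ[ℝ] A :=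
  LinearMap.mk₂ ℝ (fun x y => C.pair x y)
    (fun x x' y => by simp)
    (fun r x y => by
      show C.pair (r • x) y = r • C.pair x y
      rw [← algebraMap_smul A r x, map_smul, LinearMap.smul_apply, algebraMap_smul])
    (fun x y y' => by simp)
    (fun r x y => by
      show C.pair x (r • y) = r • C.pair x y
      rw [← algebraMap_smul A r y, map_smul, algebraMap_smul])

/-- The anchor as an `ℝ`-bilinear map `E → A → A`. -/
noncomputable def rhoR (C : CourantAlgebroid A E) : E →ₗ[ℝ] A →ₗ[ℝ] A :=
  LinearMap.mk₂ ℝ (fun x f => C.anchor x f)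
    (fun x x' f => by simp)
    (fun r x f => by
      show C.anchor (r • x) f = r • C.anchor x f
      rw [← algebraMap_smul A r x, map_smul, Derivation.smul_apply, algebraMap_smul])
    (fun x f f' => by simp)
    (fun r x f => by simp)

/-- The `A`-module structure on `E` as an `ℝ`-bilinear map. -/
noncomputable def smulR (A E : Type) [CommRing A] [Algebra ℝ A]
    [AddCommGroup E] [Module ℝ E] [Module A E] [IsScalarTower ℝ A E] :
    A →ₗ[ℝ] E →ₗ[ℝ] E :=
  LinearMap.mk₂ ℝ (fun a e => a • e)
    (fun a a' e => add_smul a a' e)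
    (fun r a e => smul_assoc r a e)
    (fun a e e' => smul_add a e e')
    (fun r a e => smul_comm a r e)

/-- Complex-bilinear extension of the pairing. -/
noncomputable def pairC (C : CourantAlgebroid A E) :
    ℂ ⊗[ℝ] E →ₗ[ℂ] ℂ ⊗[ℝ] E →ₗ[ℂ] ℂ ⊗[ℝ] A := bcBilin C.pairR

/-- Complex-bilinear extension of the Dorfman bracket. -/
noncomputable def bracC (C : CourantAlgebroid A E) :
    ℂ ⊗[ℝ] E →ₗ[ℂ] ℂ ⊗[ℝ] E →ₗ[ℂ] ℂ ⊗[ℝ] E := bcBilin C.brac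

/-- Complex-bilinear extension of the anchor. -/
noncomputable def rhoC (C : CourantAlgebroid A E) :
    ℂ ⊗[ℝ] E →ₗ[ℂ] ℂ ⊗[ℝ] A →ₗ[ℂ] ℂ ⊗[ℝ] A := bcBilin C.rhoR

/-- Complex-bilinear extension of the `A`-action on `E`. -/
noncomputable def smulC (C : CourantAlgebroid A E) :
    ℂ ⊗[ℝ] A →ₗ[ℂ] ℂ ⊗[ℝ] E →ₗ[ℂ] ℂ ⊗[ℝ] E := bcBilin (smulR A E)

/-- The `ℂ`-linear extension of an `A`-linear endomorphism of `E` to `ℂ ⊗[ℝ] E`. -/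
noncomputable def cext (F : E →ₗ[A] E) : ℂ ⊗[ℝ] E →ₗ[ℂ] ℂ ⊗[ℝ] E :=
  (F.restrictScalars ℝ).baseChange ℂ

/-- `Ω^♯ = (1/2)(I + iK)` associated with an (almost) hypercomplex triple. -/
noncomputable def OmS (I K : E →ₗ[A] E) : ℂ ⊗[ℝ] E →ₗ[ℂ] ℂ ⊗[ℝ] E :=
  (1/2 : ℂ) • (cext I + Complex.I • cext K)

/-- `Ω̄^♯ = (1/2)(I - iK)` associated with an (almost) hypercomplex triple. -/
noncomputable def ObS (I K : E →ₗ[A] E) : ℂ ⊗[ℝ] E →ₗ[ℂ] ℂ ⊗[ℝ] E :=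
  (1/2 : ℂ) • (cext I - Complex.I • cext K)

/-- `Ω(ξ,η) = ⟨Ω^♯ξ, η⟩`. -/
noncomputable def Omf (C : CourantAlgebroid A E) (I K : E →ₗ[A] E)
    (x y : ℂ ⊗[ℝ] E) : ℂ ⊗[ℝ] A :=
  C.pairC (OmS I K x) y

/-- The complexified hypercomplex connection on `ℂ ⊗[ℝ] E`. -/
noncomputable def hconnC (C : CourantAlgebroid A E) (I J K : E →ₗ[A] E)
    (U V : ℂ ⊗[ℝ] E) : ℂ ⊗[ℝ] E :=
  -((1/2 : ℂ) • cext K (C.bracC (cext J V) (cext I U) - cext J (C.bracC V (cext I U))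
      - cext I (C.bracC (cext J V) U) + cext J (cext I (C.bracC V U))))

end CourantAlgebroid

open CourantAlgebroid

theorem stmt0 {A E : Type} [CommRing A] [Algebra ℝ A] [AddCommGroup E] [Module ℝ E]
    [Module A E] [IsScalarTower ℝ A E] (C : CourantAlgebroid A E) (F G : E →ₗ[A] E)
    (hF : ∀ U V : E, C.pair (F U) V = -C.pair U (F V))
    (hG : ∀ U V : E, C.pair (G U) V = -C.pair U (G V))
    (lam : ℝ) (hFG : ∀ e : E, F (G e) + G (F e) = lam • e) :
    ∀ U V W : E,
      C.nij F G U V + C.nij F G V U = 0 ∧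
      C.pair (C.nij F G U V) W + C.pair (C.nij F G U W) V = 0 := by
  intro U V W
  have psm : ∀ (x : E) (r : ℝ) (y : E), C.pair x (r • y) = r • C.pair x y := by
    intro x r y; rw [← algebraMap_smul A r y, map_smul, algebraMap_smul]
  have asm : ∀ (x : E) (r : ℝ) (a : A), C.anchor x (r • a) = r • C.anchor x a := by
    intro x r a; simp
  have key : ∀ x y z : E, C.pair (C.brac x y) z + C.pair (C.brac x z) y
      = C.anchor x (C.pair y z) := by
    intro x y z
    rw [C.anchor_pair x y z, C.pair_symm y (C.brac x z)]
  constructor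
  · have expand : C.nij F G U V + C.nij F G V U =
        (C.brac (F U) (G V) + C.brac (G V) (F U))
        + (C.brac (G U) (F V) + C.brac (F V) (G U))
        - F (C.brac U (G V) + C.brac (G V) U)
        - F (C.brac (G U) V + C.brac V (G U))
        - G (C.brac (F U) V + C.brac V (F U))
        - G (C.brac U (F V) + C.brac (F V) U)
        + (F (G (C.brac U V + C.brac V U)) + G (F (C.brac U V + C.brac V U))) := by
      simp only [nij, nijGen, map_add]
      abel
    rw [expand]
    simp only [C.brac_add_swap]
    rw [hFG, hF U (G V), hG U (F V), hG U V, hF U V]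
    have hV : C.pair U (F (G V)) = lam • C.pair U V - C.pair U (G (F V)) := by
      rw [eq_sub_iff_add_eq, ← map_add, hFG, psm]
    rw [hV]
    simp only [map_neg, map_sub, smul_neg, neg_neg, smul_sub, map_smul]
    module
  · have l1 : C.pair (C.brac U V) (G (F W)) + C.pair (C.brac U V) (F (G W))
        = algebraMap ℝ A lam * C.pair (C.brac U V) W := by
      rw [← map_add, add_comm (G (F W)), hFG, psm, Algebra.smul_def]
    have l2 : C.pair (C.brac U W) (G (F V)) + C.pair (C.brac U W) (F (G V))
        = algebraMap ℝ A lam * C.pair (C.brac U W) V := by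
      rw [← map_add, add_comm (G (F V)), hFG, psm, Algebra.smul_def]
    have r1 : (C.anchor (F U)) (C.pair (G V) W) + (C.anchor (F U)) (C.pair V (G W)) = 0 := by
      rw [hG V W, map_neg, neg_add_cancel]
    have r2 : (C.anchor (G U)) (C.pair (F V) W) + (C.anchor (G U)) (C.pair V (F W)) = 0 := by
      rw [hF V W, map_neg, neg_add_cancel]
    have r3 : (C.anchor U) (C.pair (G V) (F W)) + (C.anchor U) (C.pair (F V) (G W))
        + algebraMap ℝ A lam * (C.anchor U) (C.pair V W) = 0 := by
      have h1 : C.pair (G V) (F W) + C.pair (F V) (G W) = -(lam • C.pair V W) := by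
        rw [hG V (F W), hF V (G W), ← neg_add, ← map_add, add_comm (G (F W)), hFG, psm]
      rw [← map_add, h1, map_neg, asm, Algebra.smul_def]
      ring
    have k1 := key (F U) (G V) W
    have k2 := key (G U) (F V) W
    have k3 := key U (G V) (F W)
    have k4 := key (G U) V (F W)
    have k5 := key (F U) V (G W)
    have k6 := key U (F V) (G W)
    have k7 := key U V W
    simp only [nij, nijGen, map_add, map_sub, LinearMap.add_apply, LinearMap.sub_apply,
      hF, hG, neg_neg]
    linear_combination k1 + k2 + k3 + k4 + k5 + k6 + l1 + l2
      + algebraMap ℝ A lam * k7 + r1 + r2 + r3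
end

section
/- Let F be a skew-symmetric A-linear endomorphism of E and define {f,g} = ⟨F(Df), Dg⟩ for f, g ∈ A. Then for all f, g, h ∈ A: {{f,g},h} + {{g,h},f} + {{h,f},g} = −(1/4)·⟨N(F,F)(Df, Dg), Dh⟩. In particular, if N(F,F) = 0 then {·,·} satisfies the Jacobi identity. -/
open scoped TensorProduct
open CourantAlgebroid

namespace CourantAlgebroid
section Helpers

variable {A E : Type} [CommRing A] [Algebra ℝ A] [AddCommGroup E] [Module ℝ E]
    [Module A E] [IsScalarTower ℝ A E] (C : CourantAlgebroid A E)

lemma brac_Dm' (x : E) (f : A) : C.brac x (C.Dm f) = C.Dm (C.anchor x f) := by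
  have h1 := C.brac_add_swap x (C.Dm f)
  rw [C.Dm_brac, add_zero] at h1
  rw [h1, C.pair_symm, C.pair_Dm, map_smul, smul_smul]
  norm_num

lemma anchor_F' (F : E →ₗ[A] E) (f g : A) :
    C.anchor (F (C.Dm f)) g = (2:ℝ) • C.pb F f g := by
  have h2 : C.pb F f g = (1/2:ℝ) • C.anchor (F (C.Dm f)) g := by
    rw [pb, C.pair_symm]; exact C.pair_Dm g (F (C.Dm f))
  rw [h2, smul_smul]; norm_num

lemma pair_Dm' (x : E) (h : A) : C.pair x (C.Dm h) = (1/2:ℝ) • C.anchor x h := by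
  rw [C.pair_symm]; exact C.pair_Dm h x

lemma pb_skew (F : E →ₗ[A] E) (hF : ∀ U V : E, C.pair (F U) V = -C.pair U (F V))
    (f g : A) : C.pb F f g = - C.pb F g f := by
  rw [pb, pb, hF, C.pair_symm (C.Dm f)]

lemma pb_smul_left (F : E →ₗ[A] E) (r : ℝ) (a g : A) :
    C.pb F (r • a) g = r • C.pb F a g := by
  rw [pb, pb, map_smul, F.map_smul_of_tower, LinearMap.map_smul_of_tower,
    LinearMap.smul_apply]

lemma pb_neg_left (F : E →ₗ[A] E) (a g : A) :
    C.pb F (-a) g = - C.pb F a g := by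
  rw [pb, pb, map_neg, map_neg, map_neg, LinearMap.neg_apply]

lemma nij_key (F : E →ₗ[A] E) (f g h : A) :
    C.pair (C.nij F F (C.Dm f) (C.Dm g)) (C.Dm h) =
      (4:ℝ) • C.pb F f (C.pb F g h) - (4:ℝ) • C.pb F g (C.pb F f h)
        - (4:ℝ) • C.pb F (C.pb F f g) h := by
  have hX : C.pair (C.brac (F (C.Dm f)) (F (C.Dm g))) (C.Dm h)
      = (2:ℝ) • C.pb F f (C.pb F g h) - (2:ℝ) • C.pb F g (C.pb F f h) := by
    rw [C.pair_Dm', C.anchor_brac, C.anchor_F' F g h, Derivation.map_smul, C.anchor_F' F f,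
      C.anchor_F' F f h, Derivation.map_smul, C.anchor_F' F g, smul_sub, smul_smul, smul_smul,
      smul_smul, smul_smul]
    norm_num
  have hY : C.pair (F (C.brac (F (C.Dm f)) (C.Dm g))) (C.Dm h)
      = (2:ℝ) • C.pb F (C.pb F f g) h := by
    rw [C.brac_Dm', C.anchor_F' F f g, map_smul, F.map_smul_of_tower,
      LinearMap.map_smul_of_tower, LinearMap.smul_apply]
    rfl
  have hnij : C.nij F F (C.Dm f) (C.Dm g)
      = (2:ℝ) • C.brac (F (C.Dm f)) (F (C.Dm g))
        - (2:ℝ) • F (C.brac (F (C.Dm f)) (C.Dm g)) := by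
    simp only [nij, nijGen, C.Dm_brac, map_zero, add_zero, sub_zero]
    module
  rw [hnij, map_sub, LinearMap.sub_apply, LinearMap.map_smul_of_tower,
    LinearMap.map_smul_of_tower, LinearMap.smul_apply, LinearMap.smul_apply,
    hX, hY, smul_sub, smul_smul, smul_smul, smul_smul]
  norm_num

end Helpers
end CourantAlgebroid

theorem stmt1 {A E : Type} [CommRing A] [Algebra ℝ A] [AddCommGroup E] [Module ℝ E]
    [Module A E] [IsScalarTower ℝ A E] (C : CourantAlgebroid A E) (F : E →ₗ[A] E)
    (hF : ∀ U V : E, C.pair (F U) V = -C.pair U (F V)) :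
    (∀ f g h : A,
      C.pb F (C.pb F f g) h + C.pb F (C.pb F g h) f + C.pb F (C.pb F h f) g =
        -((1/4 : ℝ) • C.pair (C.nij F F (C.Dm f) (C.Dm g)) (C.Dm h))) ∧
    ((∀ U V : E, C.nij F F U V = 0) →
      ∀ f g h : A,
        C.pb F (C.pb F f g) h + C.pb F (C.pb F g h) f + C.pb F (C.pb F h f) g = 0) := by
  have main : ∀ f g h : A,
      C.pb F (C.pb F f g) h + C.pb F (C.pb F g h) f + C.pb F (C.pb F h f) g =
        -((1/4 : ℝ) • C.pair (C.nij F F (C.Dm f) (C.Dm g)) (C.Dm h)) := by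
    intro f g h
    rw [C.nij_key F f g h]
    rw [C.pb_skew F hF (C.pb F g h) f, C.pb_skew F hF h f, C.pb_neg_left,
      C.pb_skew F hF (C.pb F f h) g]
    rw [smul_sub, smul_sub, smul_smul, smul_smul, smul_smul]
    norm_num
    abel
  refine ⟨main, fun hN f g h => ?_⟩
  rw [main f g h, hN, map_zero, LinearMap.zero_apply, smul_zero, neg_zero]
end

section
/- Let J be a complex structure on E and define {f,g} = ⟨J(Df), Dg⟩ for f, g ∈ A. Then {·,·} satisfies the Jacobi identity: {{f,g},h} + {{g,h},f} + {{h,f},g} = 0 for all f, g, h ∈ A. -/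
open scoped TensorProduct
open CourantAlgebroid


section Aux

variable {A E : Type} [CommRing A] [Algebra ℝ A] [AddCommGroup E] [Module ℝ E]
    [Module A E] [IsScalarTower ℝ A E] (C : CourantAlgebroid A E) (J : E →ₗ[A] E)

lemma aux_pb_antisymm (hJ : C.IsAlmostComplexStr J) (f g : A) :
    C.pb J f g = - C.pb J g f := by
  show C.pair (J (C.Dm f)) (C.Dm g) = - C.pair (J (C.Dm g)) (C.Dm f)
  rw [← hJ.2 (J (C.Dm f)) (C.Dm g), hJ.1 (C.Dm f)]
  simp [C.pair_symm (C.Dm f) (J (C.Dm g))]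

lemma aux_anchor_real_smul (r : ℝ) (x : E) (a : A) :
    C.anchor (r • x) a = r • C.anchor x a := by
  rw [← algebraMap_smul A r x, map_smul, Derivation.smul_apply, algebraMap_smul]

lemma aux_anchor_X (f g : A) :
    C.anchor (J (C.Dm f)) g = (2:ℝ) • C.pb J f g := by
  have h : C.pb J f g = (1/2:ℝ) • C.anchor (J (C.Dm f)) g := by
    show C.pair (J (C.Dm f)) (C.Dm g) = _
    rw [C.pair_symm, C.pair_Dm]
  rw [h, smul_smul]
  norm_num

lemma aux_brac_X_D (f g : A) :
    C.brac (J (C.Dm f)) (C.Dm g) = (2:ℝ) • C.Dm (C.pb J f g) := by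
  have h := C.brac_add_swap (J (C.Dm f)) (C.Dm g)
  rw [C.Dm_brac] at h
  rw [add_zero] at h
  exact h

lemma aux_brac_X_X (hJ : C.IsComplexStr J) (f g : A) :
    C.brac (J (C.Dm f)) (J (C.Dm g)) = (2:ℝ) • J (C.Dm (C.pb J f g)) := by
  have h := hJ.2 (C.Dm f) (C.Dm g)
  simp only [CourantAlgebroid.nij, CourantAlgebroid.nijGen, C.Dm_brac, map_zero,
    sub_zero, add_zero] at h
  have h2 : C.brac (J (C.Dm f)) (J (C.Dm g)) + C.brac (J (C.Dm f)) (J (C.Dm g))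
      = J (C.brac (J (C.Dm f)) (C.Dm g)) + J (C.brac (J (C.Dm f)) (C.Dm g)) := by
    rw [← sub_eq_zero, ← h]; abel
  rw [← two_smul ℝ, ← two_smul ℝ] at h2
  have h3 := smul_right_injective E (two_ne_zero (α := ℝ)) h2
  rw [h3, aux_brac_X_D, LinearMap.map_smul_of_tower]

lemma aux_key (hJ : C.IsComplexStr J) (f g h : A) :
    C.pb J (C.pb J f g) h = C.pb J f (C.pb J g h) - C.pb J g (C.pb J f h) := by
  have hab := C.anchor_brac (J (C.Dm f)) (J (C.Dm g)) h
  rw [aux_brac_X_X C J hJ] at hab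
  simp only [aux_anchor_real_smul, aux_anchor_X, Derivation.map_smul] at hab
  have h4 : (4:ℝ) • C.pb J (C.pb J f g) h
      = (4:ℝ) • (C.pb J f (C.pb J g h) - C.pb J g (C.pb J f h)) := by
    linear_combination (norm := module) hab
  exact smul_right_injective A (by norm_num : (4:ℝ) ≠ 0) h4

lemma aux_pb_neg_right (f g : A) : C.pb J f (-g) = - C.pb J f g := by
  show C.pair (J (C.Dm f)) (C.Dm (-g)) = -(C.pair (J (C.Dm f)) (C.Dm g))
  rw [map_neg (C.Dm), map_neg]

end Aux

theorem stmt2 {A E : Type} [CommRing A] [Algebra ℝ A] [AddCommGroup E] [Module ℝ E]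
    [Module A E] [IsScalarTower ℝ A E] (C : CourantAlgebroid A E) (J : E →ₗ[A] E)
    (hJ : C.IsComplexStr J) :
    ∀ f g h : A,
      C.pb J (C.pb J f g) h + C.pb J (C.pb J g h) f + C.pb J (C.pb J h f) g = 0 := by
  intro f g h
  have key := aux_key C J hJ f g h
  have a1 : C.pb J f (C.pb J g h) = - C.pb J (C.pb J g h) f :=
    aux_pb_antisymm C J hJ.1 _ _
  have a2 : C.pb J g (C.pb J f h) = C.pb J (C.pb J h f) g := by
    rw [aux_pb_antisymm C J hJ.1 f h, aux_pb_neg_right,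
      aux_pb_antisymm C J hJ.1 g (C.pb J h f), neg_neg]
  rw [key, a1, a2]
  ring
end

section
/- Let (I,J,K) be a hypercomplex structure on E and let λ₁, λ₂, λ₃ ∈ ℝ with λ₁² + λ₂² + λ₃² = 1. Then λ₁I + λ₂J + λ₃K is a complex structure on E: it squares to −id_E, it is orthogonal for the pairing, and its Nijenhuis concomitant with itself vanishes identically. -/
open scoped TensorProduct
open CourantAlgebroid

theorem stmt3 {A E : Type} [CommRing A] [Algebra ℝ A] [AddCommGroup E] [Module ℝ E]
    [Module A E] [IsScalarTower ℝ A E] (C : CourantAlgebroid A E) (I J K : E →ₗ[A] E)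
    (h : C.IsHypercomplex I J K) (l1 l2 l3 : ℝ) (hl : l1 ^ 2 + l2 ^ 2 + l3 ^ 2 = 1) :
    (∀ e : E, (l1 • I + l2 • J + l3 • K) ((l1 • I + l2 • J + l3 • K) e) = -e) ∧
    (∀ U V : E, C.pair ((l1 • I + l2 • J + l3 • K) U) ((l1 • I + l2 • J + l3 • K) V) =
      C.pair U V) ∧
    (∀ U V : E, C.nij (l1 • I + l2 • J + l3 • K) (l1 • I + l2 • J + l3 • K) U V = 0) := by
  obtain ⟨⟨⟨hI2, hIo⟩, ⟨hJ2, hJo⟩, ⟨hK2, hKo⟩, hIJK⟩, nII, nIJ, nIK, nJJ, nJK, nKK⟩ := h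
  have hIJ : ∀ e, I (J e) = K e := by
    intro e
    have h1 := hIJK (-(K e))
    simpa only [map_neg, hK2, neg_neg] using h1
  have hKJ : ∀ e, K (J e) = -(I e) := by
    intro e
    have h1 := hIJ (J e)
    rw [hJ2, map_neg] at h1
    exact h1.symm
  have hKinj : Function.Injective K := by
    intro a b hab
    have h1 := congrArg K hab
    rw [hK2, hK2] at h1
    exact neg_injective h1
  have hJinj : Function.Injective J := by
    intro a b hab
    have h1 := congrArg J hab
    rw [hJ2, hJ2] at h1
    exact neg_injective h1
  have hJI : ∀ e, J (I e) = -(K e) := by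
    intro e
    apply hKinj
    rw [hKJ, hI2, map_neg, hK2, neg_neg]
  have hKI : ∀ e, K (I e) = J e := by
    intro e
    apply hKinj
    rw [hK2, hKJ]
  have hJK : ∀ e, J (K e) = I e := by
    intro e
    apply hJinj
    rw [hJ2, hJI]
  have hIK : ∀ e, I (K e) = -(J e) := by
    intro e
    rw [← hIJ e, hI2]
  have pIJ : ∀ U V, C.pair (I U) (J V) = C.pair (K U) V := by
    intro U V
    rw [← hJo (I U) (J V)]
    simp [hJI, hJ2]
  have pJI : ∀ U V, C.pair (J U) (I V) = -C.pair (K U) V := by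
    intro U V
    rw [← hIo (J U) (I V)]
    simp [hIJ, hI2]
  have pIK : ∀ U V, C.pair (I U) (K V) = -C.pair (J U) V := by
    intro U V
    rw [← hKo (I U) (K V)]
    simp [hKI, hK2]
  have pKI : ∀ U V, C.pair (K U) (I V) = C.pair (J U) V := by
    intro U V
    rw [← hIo (K U) (I V)]
    simp [hIK, hI2]
  have pJK : ∀ U V, C.pair (J U) (K V) = C.pair (I U) V := by
    intro U V
    rw [← hKo (J U) (K V)]
    simp [hKJ, hK2]
  have pKJ : ∀ U V, C.pair (K U) (J V) = -C.pair (I U) V := by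
    intro U V
    rw [← hJo (K U) (J V)]
    simp [hJK, hJ2]
  refine ⟨?_, ?_, ?_⟩
  · intro e
    have he : -e = -((l1 ^ 2 + l2 ^ 2 + l3 ^ 2) • e) := by rw [hl, one_smul]
    simp only [LinearMap.add_apply, LinearMap.smul_apply, map_add,
      LinearMap.map_smul_of_tower, hI2, hJ2, hK2, hIJ, hJI, hIK, hKI, hJK, hKJ]
    conv_rhs => rw [he]
    module
  · intro U V
    have hp : C.pair U V = (l1 ^ 2 + l2 ^ 2 + l3 ^ 2) • C.pair U V := by
      rw [hl, one_smul]
    simp only [LinearMap.add_apply, LinearMap.smul_apply, map_add,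
      LinearMap.map_smul_of_tower, map_smul, LinearMap.smul_apply,
      hIo, hJo, hKo, pIJ, pJI, pIK, pKI, pJK, pKJ]
    conv_rhs => rw [hp]
    module
  · intro U V
    have eII := nII U V
    have eIJ := nIJ U V
    have eIK := nIK U V
    have eJJ := nJJ U V
    have eJK := nJK U V
    have eKK := nKK U V
    simp only [CourantAlgebroid.nij, CourantAlgebroid.nijGen] at eII eIJ eIK eJJ eJK eKK ⊢
    simp only [LinearMap.add_apply, LinearMap.smul_apply, map_add, map_smul,
      LinearMap.map_smul_of_tower]
    linear_combination (norm := module) (l1 * l1) • eII + (2 * (l1 * l2)) • eIJ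
      + (2 * (l1 * l3)) • eIK + (l2 * l2) • eJJ + (2 * (l2 * l3)) • eJK + (l3 * l3) • eKK
end

section
/- Let (I,J,K) be a hypercomplex structure on E. For arbitrary λ₁, λ₂, λ₃ ∈ ℝ, the bracket {f,g} = ⟨(λ₁I + λ₂J + λ₃K)(Df), Dg⟩ on A satisfies the Jacobi identity: {{f,g},h} + {{g,h},f} + {{h,f},g} = 0 for all f, g, h ∈ A. (This expresses that the Poisson brackets associated with I, J and K pairwise commute in the Schouten sense.) -/
open scoped TensorProduct
open CourantAlgebroid

namespace CourantAlgebroid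
variable {A E : Type} [CommRing A] [Algebra ℝ A] [AddCommGroup E] [Module ℝ E]
    [Module A E] [IsScalarTower ℝ A E] (C : CourantAlgebroid A E)

theorem anchor_rsmul (r : ℝ) (x : E) (f : A) : C.anchor (r • x) f = r • C.anchor x f := by
  rw [← algebraMap_smul A r x, map_smul, Derivation.smul_apply, algebraMap_smul]

theorem bracDm (x : E) (a : A) : C.brac x (C.Dm a) = C.Dm (C.anchor x a) := by
  have h := C.brac_add_swap x (C.Dm a)
  rw [C.Dm_brac, add_zero] at h
  rw [h, C.pair_symm, C.pair_Dm, map_smul, smul_smul]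
  norm_num

theorem key_of_nij (F G : E →ₗ[A] E) (f g : A) (h : C.nij F G (C.Dm f) (C.Dm g) = 0) :
    C.brac (F (C.Dm f)) (G (C.Dm g)) + C.brac (G (C.Dm f)) (F (C.Dm g))
      = G (C.brac (F (C.Dm f)) (C.Dm g)) + F (C.brac (G (C.Dm f)) (C.Dm g)) := by
  unfold nij nijGen at h
  simp only [C.Dm_brac, map_zero, LinearMap.map_zero, sub_zero, add_zero, LinearMap.zero_apply] at h
  linear_combination (norm := module) h

theorem step2 (I J K : E →ₗ[A] E) (h : C.IsHypercomplex I J K) (l1 l2 l3 : ℝ) (f g : A) :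
    C.brac ((l1 • I + l2 • J + l3 • K) (C.Dm f)) ((l1 • I + l2 • J + l3 • K) (C.Dm g))
      = (l1 • I + l2 • J + l3 • K) (C.brac ((l1 • I + l2 • J + l3 • K) (C.Dm f)) (C.Dm g)) := by
  obtain ⟨-, hII, hIJ, hIK, hJJ, hJK, hKK⟩ := h
  have kII := C.key_of_nij I I f g (hII _ _)
  have kIJ := C.key_of_nij I J f g (hIJ _ _)
  have kIK := C.key_of_nij I K f g (hIK _ _)
  have kJJ := C.key_of_nij J J f g (hJJ _ _)
  have kJK := C.key_of_nij J K f g (hJK _ _)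
  have kKK := C.key_of_nij K K f g (hKK _ _)
  simp only [LinearMap.add_apply, LinearMap.smul_apply, map_add, map_smul,
    LinearMap.map_smul_of_tower]
  linear_combination (norm := module) ((l1*l1/2 : ℝ) • kII) + ((l1*l2 : ℝ) • kIJ)
    + ((l1*l3 : ℝ) • kIK) + ((l2*l2/2 : ℝ) • kJJ) + ((l2*l3 : ℝ) • kJK)
    + ((l3*l3/2 : ℝ) • kKK)

theorem skew_of_ac (F : E →ₗ[A] E) (hF : C.IsAlmostComplexStr F) (x y : E) :
    C.pair (F x) y = - C.pair x (F y) := by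
  have h := hF.2 x (F y)
  rw [hF.1 y, map_neg] at h
  linear_combination -h

theorem skew_comb (I J K : E →ₗ[A] E) (hI : C.IsAlmostComplexStr I)
    (hJ : C.IsAlmostComplexStr J) (hK : C.IsAlmostComplexStr K) (l1 l2 l3 : ℝ) (x y : E) :
    C.pair ((l1 • I + l2 • J + l3 • K) x) y = - C.pair x ((l1 • I + l2 • J + l3 • K) y) := by
  have sI := C.skew_of_ac I hI x y
  have sJ := C.skew_of_ac J hJ x y
  have sK := C.skew_of_ac K hK x y
  simp only [LinearMap.add_apply, LinearMap.smul_apply, map_add, LinearMap.map_smul_of_tower]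
  linear_combination (norm := module) (l1 • sI) + (l2 • sJ) + (l3 • sK)

theorem pb_anchor (F : E →ₗ[A] E) (a b : A) :
    C.pb F a b = (1/2 : ℝ) • C.anchor (F (C.Dm a)) b := by
  unfold pb; rw [C.pair_symm, C.pair_Dm]

theorem pb_skew_s4 (F : E →ₗ[A] E) (hsk : ∀ x y, C.pair (F x) y = - C.pair x (F y)) (a b : A) :
    C.pb F a b = - C.pb F b a := by
  unfold pb
  rw [hsk, C.pair_symm]

theorem pb_neg_right (F : E →ₗ[A] E) (a b : A) : C.pb F a (-b) = - C.pb F a b := by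
  unfold pb; rw [map_neg, map_neg]

theorem jac (F : E →ₗ[A] E)
    (hk : ∀ f g, C.brac (F (C.Dm f)) (F (C.Dm g)) = F (C.brac (F (C.Dm f)) (C.Dm g)))
    (f g h : A) :
    C.pb F (C.pb F f g) h = C.pb F f (C.pb F g h) - C.pb F g (C.pb F f h) := by
  have e5 : F (C.Dm (C.pb F f g)) = (1/2 : ℝ) • C.brac (F (C.Dm f)) (F (C.Dm g)) := by
    rw [C.pb_anchor, map_smul, F.map_smul_of_tower, ← C.bracDm, hk]
  have e6 : ∀ a b : A, C.anchor (F (C.Dm a)) b = (2 : ℝ) • C.pb F a b := by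
    intro a b
    rw [C.pb_anchor, smul_smul]
    norm_num
  rw [C.pb_anchor F (C.pb F f g) h, e5, C.anchor_rsmul, C.anchor_brac,
    e6 g h, e6 f h, Derivation.map_smul, Derivation.map_smul, e6 f (C.pb F g h),
    e6 g (C.pb F f h)]
  module

end CourantAlgebroid

theorem stmt4 {A E : Type} [CommRing A] [Algebra ℝ A] [AddCommGroup E] [Module ℝ E]
    [Module A E] [IsScalarTower ℝ A E] (C : CourantAlgebroid A E) (I J K : E →ₗ[A] E)
    (h : C.IsHypercomplex I J K) (l1 l2 l3 : ℝ) :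
    ∀ f g h' : A,
      C.pb (l1 • I + l2 • J + l3 • K) (C.pb (l1 • I + l2 • J + l3 • K) f g) h' +
      C.pb (l1 • I + l2 • J + l3 • K) (C.pb (l1 • I + l2 • J + l3 • K) g h') f +
      C.pb (l1 • I + l2 • J + l3 • K) (C.pb (l1 • I + l2 • J + l3 • K) h' f) g = 0 := by
  intro f g h'
  set F : E →ₗ[A] E := l1 • I + l2 • J + l3 • K with hFdef
  have hI := h.1.1
  have hJ := h.1.2.1
  have hK := h.1.2.2.1
  have hk : ∀ a b : A, C.brac (F (C.Dm a)) (F (C.Dm b)) = F (C.brac (F (C.Dm a)) (C.Dm b)) :=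
    fun a b => C.step2 I J K h l1 l2 l3 a b
  have hsk : ∀ x y, C.pair (F x) y = - C.pair x (F y) :=
    fun x y => C.skew_comb I J K hI hJ hK l1 l2 l3 x y
  have J1 := C.jac F hk f g h'
  have J2 := C.jac F hk g h' f
  have J3 := C.jac F hk h' f g
  have e1 : C.pb F g (C.pb F h' f) = - C.pb F g (C.pb F f h') := by
    rw [C.pb_skew_s4 F hsk h' f, C.pb_neg_right]
  have e2 : C.pb F h' (C.pb F g f) = - C.pb F h' (C.pb F f g) := by
    rw [C.pb_skew_s4 F hsk g f, C.pb_neg_right]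
  have e3 : C.pb F f (C.pb F h' g) = - C.pb F f (C.pb F g h') := by
    rw [C.pb_skew_s4 F hsk h' g, C.pb_neg_right]
  have s4 : C.pb F h' (C.pb F f g) = - C.pb F (C.pb F f g) h' :=
    C.pb_skew_s4 F hsk h' (C.pb F f g)
  linear_combination -J1 + J2 + J3 + e1 - e2 - e3 + 2*s4
end

section
/- Let (I,J,K) be a hypercomplex structure on E and define ∇ : E × E → E by ∇_U V = −(1/2)·K(JV∘IU − J(V∘IU) − I(JV∘U) + JI(V∘U)). Then: (a) ∇ is a hypercomplex connection, i.e. ∇_{f·U}V = f·∇_U V and ∇_U(f·V) = (ρ(U)f)·V + f·∇_U V − Δ_f(U,V) for all f ∈ A, U, V ∈ E; (b) ∇I = ∇J = ∇K = 0; (c) its torsion satisfies T^∇(U,V) = I(D⟨U,IV⟩) + J(D⟨U,JV⟩) + K(D⟨U,KV⟩) for all U, V ∈ E. -/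
open scoped TensorProduct
open CourantAlgebroid

theorem stmt6 {A E : Type} [CommRing A] [Algebra ℝ A] [AddCommGroup E] [Module ℝ E]
    [Module A E] [IsScalarTower ℝ A E] (C : CourantAlgebroid A E) (I J K : E →ₗ[A] E)
    (h : C.IsHypercomplex I J K) :
    (∀ (f : A) (U V : E), C.hconn I J K (f • U) V = f • C.hconn I J K U V) ∧
    (∀ (f : A) (U V : E), C.hconn I J K U (f • V) =
      C.anchor U f • V + f • C.hconn I J K U V - C.Delta I J K f U V) ∧
    (∀ U V : E, C.hconn I J K U (I V) = I (C.hconn I J K U V)) ∧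
    (∀ U V : E, C.hconn I J K U (J V) = J (C.hconn I J K U V)) ∧
    (∀ U V : E, C.hconn I J K U (K V) = K (C.hconn I J K U V)) ∧
    (∀ U V : E,
      C.hconn I J K U V - C.hconn I J K V U - (1/2 : ℝ) • (C.brac U V - C.brac V U) =
        I (C.Dm (C.pair U (I V))) + J (C.Dm (C.pair U (J V))) + K (C.Dm (C.pair U (K V)))) := by

  obtain ⟨⟨⟨hII, hIo⟩, ⟨hJJ, hJo⟩, ⟨hKK, hKo⟩, hIJK⟩, nII, nIJ, nIK, nJJ, nJK, nKK⟩ := h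
  -- quaternion composition lemmas
  have hIJ : ∀ e : E, I (J e) = K e := by
    intro e
    have h1 := hIJK (K e)
    rw [hKK] at h1
    simp only [map_neg] at h1
    exact neg_inj.mp h1
  have hJK : ∀ e : E, J (K e) = I e := by
    intro e
    have h1 := congrArg (fun z => I z) (hIJK e)
    simp only [hII, map_neg, neg_inj] at h1
    exact h1
  have hKJ : ∀ e : E, K (J e) = -(I e) := by
    intro e
    have h1 := hIJ (J e)
    rw [hJJ] at h1
    rw [map_neg] at h1
    exact h1.symm
  have hKI : ∀ e : E, K (I e) = J e := by
    intro e
    have h1 := congrArg (fun z => K z) (hKJ e)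
    simp only [hKK, map_neg, neg_inj] at h1
    exact h1.symm
  have hJI : ∀ e : E, J (I e) = -(K e) := by
    intro e
    have h1 := hKI (I e)
    rw [hII] at h1
    rw [map_neg] at h1
    exact h1.symm
  have hIK : ∀ e : E, I (K e) = -(J e) := by
    intro e
    have h1 := congrArg (fun z => I z) (hKJ (-(J e)))
    simp only [map_neg, hJJ, hII, neg_neg] at h1
    exact h1
  -- pairing skew lemmas
  have pI : ∀ x y : E, C.pair (I x) y = -(C.pair x (I y)) := by
    intro x y
    have h1 := hIo x (I y)
    rw [hII] at h1
    rw [map_neg] at h1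
    exact neg_eq_iff_eq_neg.mp h1
  have pJ : ∀ x y : E, C.pair (J x) y = -(C.pair x (J y)) := by
    intro x y
    have h1 := hJo x (J y)
    rw [hJJ] at h1
    rw [map_neg] at h1
    exact neg_eq_iff_eq_neg.mp h1
  have pK : ∀ x y : E, C.pair (K x) y = -(C.pair x (K y)) := by
    intro x y
    have h1 := hKo x (K y)
    rw [hKK] at h1
    rw [map_neg] at h1
    exact neg_eq_iff_eq_neg.mp h1
  -- D is a derivation
  have Dm_deriv : ∀ (f g : A), C.Dm (f * g) = f • C.Dm g + g • C.Dm f := by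
    intro f g
    have hz : ∀ z : E, C.pair (C.Dm (f * g) - (f • C.Dm g + g • C.Dm f)) z = 0 := by
      intro z
      have l1 := C.pair_Dm (f * g) z
      have l2 := C.pair_Dm g z
      have l3 := C.pair_Dm f z
      have l4 := (C.anchor z).leibniz f g
      simp only [map_sub, map_add, map_smul, LinearMap.sub_apply, LinearMap.add_apply,
        LinearMap.smul_apply, smul_eq_mul]
      rw [l1, l2, l3, l4]
      simp only [smul_eq_mul, smul_add, Algebra.smul_def]
      ring
    have h0 := C.pair_nondeg _ hz
    exact sub_eq_zero.mp h0
  -- Leibniz rule in the first slot of the bracket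
  have brac_smul_left : ∀ (f : A) (x y : E),
      C.brac (f • x) y =
        f • C.brac x y - C.anchor y f • x + (2:ℝ) • (C.pair x y • C.Dm f) := by
    intro f x y
    have h1 := C.brac_add_swap (f • x) y
    rw [C.brac_smul f y x] at h1
    have h4 : C.pair (f • x) y = f * C.pair x y := by
      simp only [map_smul, LinearMap.smul_apply, smul_eq_mul]
    rw [h4, Dm_deriv f (C.pair x y)] at h1
    have h3 := C.brac_add_swap x y
    linear_combination (norm := module) h1 - f • h3
  have half_cancel : ∀ x y : E, (2:ℝ) • x = (2:ℝ) • y → x = y := by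
    intro x y hxy
    have h1 := congrArg (fun z : E => (1/2:ℝ) • z) hxy
    simp only [smul_smul] at h1
    norm_num at h1
    exact h1
  have h2half : ∀ x : E, (2:ℝ) • ((1/2:ℝ) • x) = x := by
    intro x
    rw [smul_smul]
    norm_num
  have hcomm : ∀ (g : A) (x : E), (2:ℝ) • (g • x) = g • ((2:ℝ) • x) := by
    intro g x
    exact smul_comm _ _ _
  refine ⟨?_, ?_, ?_, ?_, ?_, ?_⟩
  · -- A-linearity in U
    intro f U V
    simp only [CourantAlgebroid.hconn, map_smul, C.brac_smul, map_add, map_sub, map_neg,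
      smul_add, smul_sub, smul_neg]
    module
  · -- Leibniz rule in V
    intro f U V
    have hVU : C.pair V U = C.pair U V := C.pair_symm V U
    have hVIU : C.pair V (I U) = -(C.pair U (I V)) := by rw [C.pair_symm, pI]
    have hVJU : C.pair V (J U) = -(C.pair U (J V)) := by rw [C.pair_symm, pJ]
    have hVKU : C.pair V (K U) = -(C.pair U (K V)) := by rw [C.pair_symm, pK]
    apply half_cancel
    simp only [CourantAlgebroid.hconn, CourantAlgebroid.Delta, map_smul]
    rw [brac_smul_left f (J V) (I U), brac_smul_left f V (I U),
      brac_smul_left f (J V) U, brac_smul_left f V U]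
    simp only [smul_add, smul_sub, smul_neg, hcomm, h2half,
      map_add, map_sub, map_neg, map_zero, map_smul, LinearMap.map_smul_of_tower,
      LinearMap.add_apply, LinearMap.sub_apply, LinearMap.neg_apply, LinearMap.smul_apply,
      hII, hJJ, hKK, hIJ, hJI, hIK, hKI, hJK, hKJ, pI, pJ, pK, hVU, hVIU, hVJU, hVKU, neg_neg]
    match_scalars <;> (try ring1) <;> (simp only [map_ofNat]; try ring1)
  · -- ∇ I = 0
    intro U V
    have hVU : C.pair V U = C.pair U V := C.pair_symm V U
    have hVIU : C.pair V (I U) = -(C.pair U (I V)) := by rw [C.pair_symm, pI]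
    have hVJU : C.pair V (J U) = -(C.pair U (J V)) := by rw [C.pair_symm, pJ]
    have hVKU : C.pair V (K U) = -(C.pair U (K V)) := by rw [C.pair_symm, pK]
    have hGI0 := congrArg (fun e => I e) (C.brac_add_swap U V)
    have hGI1 := C.brac_add_swap U (I V)
    have hGI2 := C.brac_add_swap V (I U)
    have hGI3 := congrArg (fun e => K e) (C.brac_add_swap U (J V))
    have hGI4 := congrArg (fun e => J e) (C.brac_add_swap U (K V))
    have hGI5 := congrArg (fun e => I e) (C.brac_add_swap (I U) (I V))
    have hGI6 := congrArg (fun e => J e) (C.brac_add_swap (I U) (J V))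
    have hGI7 := congrArg (fun e => K e) (C.brac_add_swap (I U) (K V))
    have hGI8 := congrArg (fun e => I e) (nII U V)
    have hGI9 := congrArg (fun e => K e) (nII U (J V))
    simp only [CourantAlgebroid.nij, CourantAlgebroid.nijGen,
      map_add, map_sub, map_neg, map_zero, map_smul, LinearMap.map_smul_of_tower,
      LinearMap.add_apply, LinearMap.sub_apply, LinearMap.neg_apply, LinearMap.smul_apply,
      hII, hJJ, hKK, hIJ, hJI, hIK, hKI, hJK, hKJ, pI, pJ, pK, hVU, hVIU, hVJU, hVKU,
      smul_neg, neg_neg] at hGI0 hGI1 hGI2 hGI3 hGI4 hGI5 hGI6 hGI7 hGI8 hGI9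
    simp only [CourantAlgebroid.hconn, map_add, map_sub, map_neg, map_smul,
      LinearMap.map_smul_of_tower, LinearMap.add_apply, LinearMap.sub_apply,
      LinearMap.neg_apply, LinearMap.smul_apply,
      hII, hJJ, hKK, hIJ, hJI, hIK, hKI, hJK, hKJ, smul_neg, neg_neg]
    linear_combination (norm := module) (1/2 : ℝ) • hGI0 - (1/2 : ℝ) • hGI1 -
      (1/2 : ℝ) • hGI2 - (1/2 : ℝ) • hGI3 - (1/2 : ℝ) • hGI4 - (1/2 : ℝ) • hGI5 -
      (1/2 : ℝ) • hGI6 + (1/2 : ℝ) • hGI7 + (1/4 : ℝ) • hGI8 - (1/4 : ℝ) • hGI9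
  · -- ∇ J = 0
    intro U V
    simp only [CourantAlgebroid.hconn, map_add, map_sub, map_neg, map_smul,
      LinearMap.map_smul_of_tower, LinearMap.add_apply, LinearMap.sub_apply,
      LinearMap.neg_apply, LinearMap.smul_apply,
      hII, hJJ, hKK, hIJ, hJI, hIK, hKI, hJK, hKJ, smul_neg, neg_neg]
    module
  · -- ∇ K = 0
    intro U V
    have hVU : C.pair V U = C.pair U V := C.pair_symm V U
    have hVIU : C.pair V (I U) = -(C.pair U (I V)) := by rw [C.pair_symm, pI]
    have hVJU : C.pair V (J U) = -(C.pair U (J V)) := by rw [C.pair_symm, pJ]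
    have hVKU : C.pair V (K U) = -(C.pair U (K V)) := by rw [C.pair_symm, pK]
    have hGK0 := congrArg (fun e => K e) (C.brac_add_swap U V)
    have hGK1 := congrArg (fun e => J e) (C.brac_add_swap U (I V))
    have hGK2 := congrArg (fun e => J e) (C.brac_add_swap V (I U))
    have hGK3 := congrArg (fun e => I e) (C.brac_add_swap U (J V))
    have hGK4 := C.brac_add_swap U (K V)
    have hGK5 := congrArg (fun e => K e) (C.brac_add_swap (I U) (I V))
    have hGK6 := C.brac_add_swap (I U) (J V)
    have hGK7 := congrArg (fun e => I e) (C.brac_add_swap (I U) (K V))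
    have hGK8 := congrArg (fun e => K e) (nII U V)
    have hGK9 := congrArg (fun e => I e) (nII U (J V))
    simp only [CourantAlgebroid.nij, CourantAlgebroid.nijGen,
      map_add, map_sub, map_neg, map_zero, map_smul, LinearMap.map_smul_of_tower,
      LinearMap.add_apply, LinearMap.sub_apply, LinearMap.neg_apply, LinearMap.smul_apply,
      hII, hJJ, hKK, hIJ, hJI, hIK, hKI, hJK, hKJ, pI, pJ, pK, hVU, hVIU, hVJU, hVKU,
      smul_neg, neg_neg] at hGK0 hGK1 hGK2 hGK3 hGK4 hGK5 hGK6 hGK7 hGK8 hGK9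
    simp only [CourantAlgebroid.hconn, map_add, map_sub, map_neg, map_smul,
      LinearMap.map_smul_of_tower, LinearMap.add_apply, LinearMap.sub_apply,
      LinearMap.neg_apply, LinearMap.smul_apply,
      hII, hJJ, hKK, hIJ, hJI, hIK, hKI, hJK, hKJ, smul_neg, neg_neg]
    linear_combination (norm := module) (1/2 : ℝ) • hGK0 + (1/2 : ℝ) • hGK1 +
      (1/2 : ℝ) • hGK2 + (1/2 : ℝ) • hGK3 - (1/2 : ℝ) • hGK4 - (1/2 : ℝ) • hGK5 -
      (1/2 : ℝ) • hGK6 - (1/2 : ℝ) • hGK7 + (1/4 : ℝ) • hGK8 + (1/4 : ℝ) • hGK9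
  · -- torsion formula
    intro U V
    have hVU : C.pair V U = C.pair U V := C.pair_symm V U
    have hVIU : C.pair V (I U) = -(C.pair U (I V)) := by rw [C.pair_symm, pI]
    have hVJU : C.pair V (J U) = -(C.pair U (J V)) := by rw [C.pair_symm, pJ]
    have hVKU : C.pair V (K U) = -(C.pair U (K V)) := by rw [C.pair_symm, pK]
    have hGC0 := congrArg (fun e => I e) (C.brac_add_swap V (I U))
    have hGC1 := congrArg (fun e => J e) (C.brac_add_swap U (J V))
    have hGC2 := congrArg (fun e => K e) (C.brac_add_swap (I U) (J V))
    have hGC3 := congrArg (fun e => K e) (nIJ U V)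
    simp only [CourantAlgebroid.nij, CourantAlgebroid.nijGen,
      map_add, map_sub, map_neg, map_zero, map_smul, LinearMap.map_smul_of_tower,
      LinearMap.add_apply, LinearMap.sub_apply, LinearMap.neg_apply, LinearMap.smul_apply,
      hII, hJJ, hKK, hIJ, hJI, hIK, hKI, hJK, hKJ, pI, pJ, pK, hVU, hVIU, hVJU, hVKU,
      smul_neg, neg_neg] at hGC0 hGC1 hGC2 hGC3
    simp only [CourantAlgebroid.hconn, map_add, map_sub, map_neg, map_smul,
      LinearMap.map_smul_of_tower, LinearMap.add_apply, LinearMap.sub_apply,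
      LinearMap.neg_apply, LinearMap.smul_apply,
      hII, hJJ, hKK, hIJ, hJI, hIK, hKI, hJK, hKJ, smul_neg, neg_neg]
    linear_combination (norm := module) -((1/2 : ℝ) • hGC0) + (1/2 : ℝ) • hGC1 -
      (1/2 : ℝ) • hGC2 + (1/2 : ℝ) • hGC3
end

section
/- Let (I,J,K) be an almost hypercomplex structure on E. If ∇¹ and ∇² are hypercomplex connections that both satisfy ∇I = ∇J = ∇K = 0 and T^∇(U,V) = I(D⟨U,IV⟩) + J(D⟨U,JV⟩) + K(D⟨U,KV⟩) for all U, V ∈ E, then ∇¹ = ∇². -/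
open scoped TensorProduct
open CourantAlgebroid

theorem stmt7 {A E : Type} [CommRing A] [Algebra ℝ A] [AddCommGroup E] [Module ℝ E]
    [Module A E] [IsScalarTower ℝ A E] (C : CourantAlgebroid A E) (I J K : E →ₗ[A] E)
    (h : C.IsAlmostHypercomplex I J K) (D1 D2 : E →ₗ[ℝ] E →ₗ[ℝ] E)
    (h1 : C.IsHConn I J K D1) (h2 : C.IsHConn I J K D2)
    (h1I : ∀ U V : E, D1 U (I V) = I (D1 U V))
    (h1J : ∀ U V : E, D1 U (J V) = J (D1 U V))
    (h1K : ∀ U V : E, D1 U (K V) = K (D1 U V))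
    (h2I : ∀ U V : E, D2 U (I V) = I (D2 U V))
    (h2J : ∀ U V : E, D2 U (J V) = J (D2 U V))
    (h2K : ∀ U V : E, D2 U (K V) = K (D2 U V))
    (h1T : ∀ U V : E, C.torsion D1 U V =
      I (C.Dm (C.pair U (I V))) + J (C.Dm (C.pair U (J V))) + K (C.Dm (C.pair U (K V))))
    (h2T : ∀ U V : E, C.torsion D2 U V =
      I (C.Dm (C.pair U (I V))) + J (C.Dm (C.pair U (J V))) + K (C.Dm (C.pair U (K V)))) :
    D1 = D2 := by
  obtain ⟨⟨hII, _⟩, ⟨hJJ, _⟩, ⟨hKK, _⟩, hIJK⟩ := h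
  -- quaternionic identities
  have hIJ : ∀ y : E, I (J y) = K y := by
    intro y
    have h0 := hIJK (-(K y))
    simp only [map_neg, hKK, neg_neg] at h0
    exact h0
  have hJI : ∀ y : E, J (I y) = -(K y) := by
    intro y
    have h0 := hIJ (J (I y))
    rw [hJJ, map_neg, hII, neg_neg] at h0
    -- h0 : y = K (J (I y))
    have h1 := congrArg K h0
    rw [hKK] at h1
    -- h1 : K y = -(J (I y))
    rw [eq_neg_iff_add_eq_zero] at h1 ⊢
    rw [add_comm] at h1
    exact h1
  -- the difference tensor
  set S : E → E → E := fun U V => D1 U V - D2 U V with hS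
  have hsym : ∀ U V : E, S U V = S V U := by
    intro U V
    have ht : C.torsion D1 U V = C.torsion D2 U V := (h1T U V).trans (h2T U V).symm
    unfold CourantAlgebroid.torsion at ht
    simp only [hS]
    have := sub_left_injective ht
    -- this : D1 U V - D1 V U = D2 U V - D2 V U
    rw [sub_eq_sub_iff_sub_eq_sub] at this
    exact this
  have sI : ∀ U V : E, S U (I V) = I (S U V) := by
    intro U V; simp only [hS, h1I, h2I, map_sub]
  have sJ : ∀ U V : E, S U (J V) = J (S U V) := by
    intro U V; simp only [hS, h1J, h2J, map_sub]
  have key : ∀ U V : E, S U V = 0 := by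
    intro U V
    have e1 : S (I U) (J V) = J (I (S U V)) := by
      rw [sJ, hsym (I U) V, sI, hsym V U]
    have e2 : S (I U) (J V) = I (J (S U V)) := by
      rw [hsym, sI, hsym (J V) U, sJ]
    have e3 : I (J (S U V)) = J (I (S U V)) := e2.symm.trans e1
    rw [hIJ, hJI] at e3
    -- e3 : K (S U V) = -(K (S U V))
    have e4 : K (S U V) = 0 := by
      have h2' : (2 : ℝ) • K (S U V) = 0 := by
        rw [two_smul]
        nth_rewrite 1 [e3]
        exact neg_add_cancel _
      have := smul_eq_zero.mp h2'
      rcases this with h' | h'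
      · norm_num at h'
      · exact h'
    have e5 := congrArg K e4
    rw [hKK, map_zero] at e5
    exact neg_eq_zero.mp e5
  ext U V
  have := key U V
  simp only [hS] at this
  exact sub_eq_zero.mp this
end

section
/- Let (I,J,K) be an almost hypercomplex structure on E and define ∇ : E × E → E by ∇_U V = −(1/2)·K(JV∘IU − J(V∘IU) − I(JV∘U) + JI(V∘U)). Then for all U, V ∈ E: T^∇(U,V) − (1/2)·K(N(I,J)(U,V)) = I(D⟨U,IV⟩) + J(D⟨U,JV⟩) + K(D⟨U,KV⟩). -/
open scoped TensorProduct
open CourantAlgebroid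

theorem stmt8 {A E : Type} [CommRing A] [Algebra ℝ A] [AddCommGroup E] [Module ℝ E]
    [Module A E] [IsScalarTower ℝ A E] (C : CourantAlgebroid A E) (I J K : E →ₗ[A] E)
    (h : C.IsAlmostHypercomplex I J K) :
    ∀ U V : E,
      C.hconn I J K U V - C.hconn I J K V U - (1/2 : ℝ) • (C.brac U V - C.brac V U) -
        (1/2 : ℝ) • K (C.nij I J U V) =
      I (C.Dm (C.pair U (I V))) + J (C.Dm (C.pair U (J V))) + K (C.Dm (C.pair U (K V))) := by
  obtain ⟨hI, hJ, hK, hIJK⟩ := h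
  have hI2 : ∀ e, I (I e) = -e := hI.1
  have hJ2 : ∀ e, J (J e) = -e := hJ.1
  have hK2 : ∀ e, K (K e) = -e := hK.1
  -- quaternion identities
  have hIJ : ∀ e, I (J e) = K e := by
    intro e
    have h1 := hIJK (K e)
    rw [hK2 e] at h1
    have : I (J (-e)) = -(K e) := h1
    simpa using this
  have hJK : ∀ e, J (K e) = I e := by
    intro e
    have h1 := congrArg I (hIJK e)
    rw [hI2 (J (K e))] at h1
    have h2 : -(J (K e)) = -(I e) := by simpa using h1
    simpa using h2
  have hIK : ∀ e, I (K e) = -(J e) := by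
    intro e
    rw [← hIJ e, hI2]
  have hKJ : ∀ e, K (J e) = -(I e) := by
    intro e
    rw [← hIJ (J e), hJ2]
    simp
  have hKI : ∀ e, K (I e) = J e := by
    intro e
    rw [← hJK e, hKJ, hIK]
    simp
  have hJI : ∀ e, J (I e) = -(K e) := by
    intro e
    rw [← hJK e, hJ2]
  intro U V
  -- pairing rewrites
  have hp1 : C.pair (J V) (I U) = -(C.pair U (K V)) := by
    rw [C.pair_symm, ← hI.2 (I U) (J V), hI2, hIJ]
    simp [C.pair_symm (K V) U]
  have hp2 : C.pair V (I U) = -(C.pair U (I V)) := by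
    rw [C.pair_symm, ← hI.2 (I U) V, hI2]
    simp [C.pair_symm (I V) U]
  have hp3 : C.pair (J V) U = C.pair U (J V) := C.pair_symm _ _
  have hp4 : C.pair V U = C.pair U V := C.pair_symm _ _
  have swap : ∀ x y : E, C.brac x y = (2 : ℝ) • C.Dm (C.pair x y) - C.brac y x :=
    fun x y => eq_sub_of_add_eq (C.brac_add_swap x y)
  simp only [hconn, nij, nijGen]
  rw [swap (J V) (I U), swap V (I U), swap (J V) U, swap V U]
  simp only [map_add, map_sub, map_neg, LinearMap.map_smul_of_tower, hIJ, hJI, hKI, hKJ, hIK, hJK,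
    hI2, hJ2, hK2, hp1, hp2, hp3, hp4, smul_sub, smul_add, smul_neg]
  module
end

section
/- Let (I,J,K) be an almost hypercomplex structure on E. If there exists a hypercomplex connection ∇ satisfying ∇I = ∇J = ∇K = 0 and T^∇(U,V) = I(D⟨U,IV⟩) + J(D⟨U,JV⟩) + K(D⟨U,KV⟩) for all U, V ∈ E, then N(I,J) = 0. -/
open scoped TensorProduct
open CourantAlgebroid

theorem stmt9 {A E : Type} [CommRing A] [Algebra ℝ A] [AddCommGroup E] [Module ℝ E]
    [Module A E] [IsScalarTower ℝ A E] (C : CourantAlgebroid A E) (I J K : E →ₗ[A] E)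
    (h : C.IsAlmostHypercomplex I J K)
    (hex : ∃ D : E →ₗ[ℝ] E →ₗ[ℝ] E, C.IsHConn I J K D ∧
      (∀ U V : E, D U (I V) = I (D U V)) ∧
      (∀ U V : E, D U (J V) = J (D U V)) ∧
      (∀ U V : E, D U (K V) = K (D U V)) ∧
      (∀ U V : E, C.torsion D U V =
        I (C.Dm (C.pair U (I V))) + J (C.Dm (C.pair U (J V))) + K (C.Dm (C.pair U (K V))))) :
    ∀ U V : E, C.nij I J U V = 0 := by
  obtain ⟨Dc, _hDc, hDI, hDJ, hDK, hT⟩ := hex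
  obtain ⟨⟨hII, hIo⟩, ⟨hJJ, hJo⟩, ⟨hKK, hKo⟩, hIJK⟩ := h
  -- quaternionic composition identities
  have hIJ : ∀ e, I (J e) = K e := by
    intro e
    have h1 := hIJK (K e)
    rw [hKK, map_neg, map_neg, neg_inj] at h1
    exact h1
  have hJK : ∀ e, J (K e) = I e := by
    intro e
    have h1 := congrArg I (hIJK e)
    rw [hII, map_neg] at h1
    exact neg_injective h1
  have hIK : ∀ e, I (K e) = -(J e) := by
    intro e
    rw [show K e = I (J e) from (hIJ e).symm, hII]
  have hJI : ∀ e, J (I e) = -(K e) := by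
    intro e
    rw [show I e = J (K e) from (hJK e).symm, hJJ]
  have hKJ : ∀ e, K (J e) = -(I e) := by
    intro e
    rw [show K (J e) = I (J (J e)) from (hIJ (J e)).symm, hJJ, map_neg]
  have hKI : ∀ e, K (I e) = J e := by
    intro e
    rw [show K (I e) = I (J (I e)) from (hIJ (I e)).symm, hJI, map_neg, hIK, neg_neg]
  -- moving the complex structures across the pairing
  have aI : ∀ x y : E, C.pair (I x) y = -(C.pair x (I y)) := by
    intro x y
    have h1 := hIo (I x) y
    rw [hII] at h1
    rw [← h1]; simp
  have aJ : ∀ x y : E, C.pair (J x) y = -(C.pair x (J y)) := by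
    intro x y
    have h1 := hJo (J x) y
    rw [hJJ] at h1
    rw [← h1]; simp
  have aK : ∀ x y : E, C.pair (K x) y = -(C.pair x (K y)) := by
    intro x y
    have h1 := hKo (K x) y
    rw [hKK] at h1
    rw [← h1]; simp
  -- express the bracket via the connection
  have key : ∀ U V : E, C.brac U V = Dc U V - Dc V U + C.Dm (C.pair U V)
      - (I (C.Dm (C.pair U (I V))) + J (C.Dm (C.pair U (J V)))
        + K (C.Dm (C.pair U (K V)))) := by
    intro U V
    have ht := hT U V
    rw [CourantAlgebroid.torsion] at ht
    have hs := C.brac_add_swap U V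
    linear_combination (norm := module) (-1 : ℝ) • ht + (1/2 : ℝ) • hs
  intro U V
  simp only [CourantAlgebroid.nij, CourantAlgebroid.nijGen]
  simp only [key, hDI, hDJ, hDK, map_add, map_sub, map_neg, aI, aJ, aK,
    hII, hJJ, hKK, hIJ, hJI, hIK, hKI, hJK, hKJ, neg_neg]
  abel
end

section
/- Let (I,J,K) be an almost hypercomplex structure on E. If N(I,J) = 0, then N(I,I) = 0 and N(J,J) = 0. -/
open scoped TensorProduct
open CourantAlgebroid

theorem stmt10 {A E : Type} [CommRing A] [Algebra ℝ A] [AddCommGroup E] [Module ℝ E]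
    [Module A E] [IsScalarTower ℝ A E] (C : CourantAlgebroid A E) (I J K : E →ₗ[A] E)
    (h : C.IsAlmostHypercomplex I J K) (hIJ : ∀ U V : E, C.nij I J U V = 0) :
    (∀ U V : E, C.nij I I U V = 0) ∧ (∀ U V : E, C.nij J J U V = 0) := by
  obtain ⟨⟨hI2, _⟩, ⟨hJ2, _⟩, ⟨hK2, _⟩, hIJK⟩ := h
  -- K = I ∘ J pointwise
  have hK : ∀ e, K e = I (J e) := by
    intro e
    have h1 := hIJK (K e)
    rw [hK2 e, map_neg, map_neg] at h1
    have := neg_injective h1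
    exact this.symm
  -- (I∘J)² = -1
  have hP2 : ∀ e, I (J (I (J e))) = -e := by
    intro e
    rw [← hK, ← hK, hK2]
  -- J ∘ I = -(I ∘ J)
  have hJI : ∀ e, J (I e) = -(I (J e)) := by
    intro e
    have hinj : ∀ a b : E, I (J a) = I (J b) → a = b := by
      intro a b hab
      have := congrArg (fun z => I (J z)) hab
      simp only [hP2] at this
      exact neg_injective this
    apply hinj
    rw [hJ2, map_neg, hI2, neg_neg, map_neg, map_neg, hP2, neg_neg]
  constructor
  · intro U V
    have h1 := congrArg (fun e => I (J e)) (hIJ U V)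
    have h2 := congrArg (fun e => J e) (hIJ U (I V))
    have h3 := congrArg (fun e => J e) (hIJ (I U) V)
    have h4 := congrArg (fun e => I (J e)) (hIJ (I U) (I V))
    simp only [map_zero] at h1 h2 h3 h4
    have key : C.nij I I U V =
        -(I (J (C.nij I J U V))) + J (C.nij I J U (I V)) + J (C.nij I J (I U) V)
          + I (J (C.nij I J (I U) (I V))) := by
      simp only [nij, nijGen, map_add, map_sub, map_neg, hI2, hJ2, hJI, hP2,
        LinearMap.neg_apply, neg_neg]
      abel
    rw [key, h1, h2, h3, h4]
    simp
  · intro U V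
    have h1 := congrArg (fun e => I (J e)) (hIJ U V)
    have h2 := congrArg (fun e => I e) (hIJ U (J V))
    have h3 := congrArg (fun e => I e) (hIJ (J U) V)
    have h4 := congrArg (fun e => I (J e)) (hIJ (J U) (J V))
    simp only [map_zero] at h1 h2 h3 h4
    have key : C.nij J J U V =
        I (J (C.nij I J U V)) + I (C.nij I J U (J V)) + I (C.nij I J (J U) V)
          - I (J (C.nij I J (J U) (J V))) := by
      simp only [nij, nijGen, map_add, map_sub, map_neg, hI2, hJ2, hJI, hP2,
        LinearMap.neg_apply, neg_neg]
      abel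
    rw [key, h1, h2, h3, h4]
    simp
end

section
/- Let (I,J,K) be a hypercomplex structure on E. Then for all ξ, η, ζ ∈ L*_J (with the Nijenhuis concomitant formed using the ℂ-bilinearly extended bracket): ⟨N(I,J)(ξ,η), ζ⟩ = 2i·(−ρ(ζ)Ω(ξ,η) + ρ(η)Ω(ξ,ζ) − ρ(ξ)Ω(η,ζ) + Ω(ξ∘η, ζ) + Ω(η, ξ∘ζ) − Ω(ξ, η∘ζ)). -/
open scoped TensorProduct
open CourantAlgebroid

section Aux

variable {A E : Type} [CommRing A] [Algebra ℝ A] [AddCommGroup E] [Module ℝ E]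
    [Module A E] [IsScalarTower ℝ A E]

lemma bcBilin_tmul {M N P : Type} [AddCommGroup M] [Module ℝ M] [AddCommGroup N] [Module ℝ N]
    [AddCommGroup P] [Module ℝ P] (B : M →ₗ[ℝ] N →ₗ[ℝ] P) (z w : ℂ) (m : M) (n : N) :
    bcBilin B (z ⊗ₜ[ℝ] m) (w ⊗ₜ[ℝ] n) = (z * w) ⊗ₜ[ℝ] (B m n) := by
  simp [bcBilin, LinearMap.liftBaseChange_tmul, TensorProduct.smul_tmul']

lemma cext_tmul (F : E →ₗ[A] E) (z : ℂ) (e : E) :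
    cext F (z ⊗ₜ[ℝ] e) = z ⊗ₜ[ℝ] (F e) := rfl

variable (C : CourantAlgebroid A E)

lemma pairC_tmul (z w : ℂ) (x y : E) :
    C.pairC (z ⊗ₜ[ℝ] x) (w ⊗ₜ[ℝ] y) = (z * w) ⊗ₜ[ℝ] (C.pair x y) := by
  rw [CourantAlgebroid.pairC, bcBilin_tmul]; rfl

lemma bracC_tmul (z w : ℂ) (x y : E) :
    C.bracC (z ⊗ₜ[ℝ] x) (w ⊗ₜ[ℝ] y) = (z * w) ⊗ₜ[ℝ] (C.brac x y) := by
  rw [CourantAlgebroid.bracC, bcBilin_tmul]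

lemma rhoC_tmul (z w : ℂ) (x : E) (f : A) :
    C.rhoC (z ⊗ₜ[ℝ] x) (w ⊗ₜ[ℝ] f) = (z * w) ⊗ₜ[ℝ] (C.anchor x f) := by
  rw [CourantAlgebroid.rhoC, bcBilin_tmul]; rfl

lemma real_sym_brac (x y z : E) :
    C.pair (C.brac x y) z + C.pair (C.brac y x) z = C.anchor z (C.pair x y) := by
  have h : C.pair (C.brac x y + C.brac y x) z = C.anchor z (C.pair x y) := by
    rw [C.brac_add_swap, ← algebraMap_smul A (2:ℝ) (C.Dm (C.pair x y)), map_smul,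
      LinearMap.smul_apply, algebraMap_smul, C.pair_Dm, smul_smul]
    norm_num
  simpa [map_add, LinearMap.add_apply] using h

lemma real_skew (F : E →ₗ[A] E) (Fsq : ∀ e, F (F e) = -e)
    (Fo : ∀ x y, C.pair (F x) (F y) = C.pair x y) (x y : E) :
    C.pair (F x) y = -(C.pair x (F y)) := by
  have h := Fo x (F y)
  rw [Fsq, map_neg] at h
  exact neg_eq_iff_eq_neg.mp h

lemma cext_cext (F G H : E →ₗ[A] E) (hfg : ∀ e, F (G e) = H e) (x : ℂ ⊗[ℝ] E) :
    cext F (cext G x) = cext H x := by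
  induction x using TensorProduct.induction_on with
  | zero => simp
  | tmul z e => rw [cext_tmul, cext_tmul, cext_tmul, hfg]
  | add a b ha hb => simp only [map_add, ha, hb]

lemma cext_cext_neg (F G H : E →ₗ[A] E) (hfg : ∀ e, F (G e) = -(H e)) (x : ℂ ⊗[ℝ] E) :
    cext F (cext G x) = -(cext H x) := by
  induction x using TensorProduct.induction_on with
  | zero => simp
  | tmul z e => rw [cext_tmul, cext_tmul, cext_tmul, hfg, TensorProduct.tmul_neg]
  | add a b ha hb => simp only [map_add, ha, hb]; abel

lemma cpair_skew (F : E →ₗ[A] E)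
    (hf : ∀ x y, C.pair (F x) y = -(C.pair x (F y))) (x y : ℂ ⊗[ℝ] E) :
    C.pairC (cext F x) y = -(C.pairC x (cext F y)) := by
  induction x using TensorProduct.induction_on with
  | zero => simp
  | add a b ha hb => simp only [map_add, LinearMap.add_apply, ha, hb, neg_add]
  | tmul z e =>
    induction y using TensorProduct.induction_on with
    | zero => simp
    | add a b ha hb => simp only [map_add, LinearMap.add_apply, ha, hb, neg_add]
    | tmul w f => rw [cext_tmul, cext_tmul, pairC_tmul, pairC_tmul, hf, TensorProduct.tmul_neg]

lemma capC (x y z : ℂ ⊗[ℝ] E) :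
    C.rhoC x (C.pairC y z) = C.pairC (C.bracC x y) z + C.pairC y (C.bracC x z) := by
  induction x using TensorProduct.induction_on with
  | zero => simp
  | add a b ha hb => simp only [map_add, LinearMap.add_apply, ha, hb]; abel
  | tmul z₁ x =>
    induction y using TensorProduct.induction_on with
    | zero => simp
    | add a b ha hb => simp only [map_add, LinearMap.add_apply, ha, hb]; abel
    | tmul z₂ y =>
      induction z using TensorProduct.induction_on with
      | zero => simp
      | add a b ha hb => simp only [map_add, LinearMap.add_apply, ha, hb]; abel
      | tmul z₃ w =>
        rw [pairC_tmul, rhoC_tmul, C.anchor_pair, TensorProduct.tmul_add, bracC_tmul,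
          bracC_tmul, pairC_tmul, pairC_tmul]
        ring_nf

lemma csbC (x y z : ℂ ⊗[ℝ] E) :
    C.pairC (C.bracC x y) z + C.pairC (C.bracC y x) z = C.rhoC z (C.pairC x y) := by
  induction x using TensorProduct.induction_on with
  | zero => simp
  | add a b ha hb => simp only [map_add, LinearMap.add_apply]; rw [← ha, ← hb]; abel
  | tmul z₁ x =>
    induction y using TensorProduct.induction_on with
    | zero => simp
    | add a b ha hb => simp only [map_add, LinearMap.add_apply]; rw [← ha, ← hb]; abel
    | tmul z₂ y =>
      induction z using TensorProduct.induction_on with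
      | zero => simp
      | add a b ha hb => simp only [map_add, LinearMap.add_apply]; rw [← ha, ← hb]; abel
      | tmul z₃ w =>
        rw [bracC_tmul, bracC_tmul, pairC_tmul, pairC_tmul, pairC_tmul, rhoC_tmul,
          show z₂ * z₁ = z₁ * z₂ from mul_comm _ _, ← TensorProduct.tmul_add,
          real_sym_brac, show z₁ * z₂ * z₃ = z₃ * (z₁ * z₂) from by ring]

lemma OmS_eig (I J K : E →ₗ[A] E) (hIJc : ∀ x, cext I (cext J x) = cext K x)
    {x : ℂ ⊗[ℝ] E} (hx : cext J x = -(Complex.I • x)) :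
    OmS I K x = cext I x := by
  have hK : cext K x = -(Complex.I • cext I x) := by
    rw [← hIJc x, hx, map_neg, map_smul]
  simp only [OmS, LinearMap.smul_apply, LinearMap.add_apply, hK, smul_neg, smul_smul,
    Complex.I_mul_I, neg_smul, one_smul, neg_neg]
  rw [← two_smul ℂ, smul_smul]
  norm_num

lemma OmS_skew (I K : E →ₗ[A] E)
    (sIc : ∀ x y, C.pairC (cext I x) y = -(C.pairC x (cext I y)))
    (sKc : ∀ x y, C.pairC (cext K x) y = -(C.pairC x (cext K y))) (x y : ℂ ⊗[ℝ] E) :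
    C.pairC (OmS I K x) y = -(C.pairC x (OmS I K y)) := by
  simp only [OmS, LinearMap.smul_apply, LinearMap.add_apply, map_smul, map_add,
    LinearMap.add_apply, sIc, sKc, smul_neg]
  module

end Aux

theorem stmt12 {A E : Type} [CommRing A] [Algebra ℝ A] [AddCommGroup E] [Module ℝ E]
    [Module A E] [IsScalarTower ℝ A E] (C : CourantAlgebroid A E) (I J K : E →ₗ[A] E)
    (h : C.IsHypercomplex I J K) :
    ∀ ξ η ζ : ℂ ⊗[ℝ] E, ξ ∈ eigM (cext J) → η ∈ eigM (cext J) → ζ ∈ eigM (cext J) →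
      C.pairC (nijGen (fun x y => C.bracC x y) (⇑(cext I)) (⇑(cext J)) ξ η) ζ =
        (2 * Complex.I) •
          (-(C.rhoC ζ (C.Omf I K ξ η)) + C.rhoC η (C.Omf I K ξ ζ) - C.rhoC ξ (C.Omf I K η ζ)
            + C.Omf I K (C.bracC ξ η) ζ + C.Omf I K η (C.bracC ξ ζ)
            - C.Omf I K ξ (C.bracC η ζ)) := by
  obtain ⟨⟨⟨hI2, hIo⟩, ⟨hJ2, hJo⟩, ⟨hK2, hKo⟩, hIJK⟩, -, -, -, -, -, -⟩ := h
  have hIJ : ∀ e, I (J e) = K e := by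
    intro e
    have h1 := hIJK (-(K e))
    simp only [map_neg, hK2, neg_neg] at h1
    exact h1
  have hInj : ∀ a b : E, I a = I b → a = b := by
    intro a b hab
    have h2 := congrArg I hab
    rw [hI2, hI2] at h2
    exact neg_injective h2
  have hJIJ : ∀ e, J (I (J e)) = I e := by
    intro e
    apply hInj
    rw [hIJ, hIJ, hK2, hI2]
  have hJI : ∀ e, J (I e) = -(K e) := by
    intro e
    have h1 := hJIJ (-(J e))
    simp only [map_neg, hJ2, neg_neg] at h1
    rw [h1, hIJ]
  have sI := real_skew C I hI2 hIo
  have sJ := real_skew C J hJ2 hJo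
  have sK := real_skew C K hK2 hKo
  have cIJ : ∀ x, cext I (cext J x) = cext K x := cext_cext I J K hIJ
  have cJI : ∀ x, cext J (cext I x) = -(cext K x) := cext_cext_neg J I K hJI
  have cSkI := cpair_skew C I sI
  have cSkJ := cpair_skew C J sJ
  have cSkK := cpair_skew C K sK
  intro ξ η ζ hξ hη hζ
  have hξ' : cext J ξ = -(Complex.I • ξ) := hξ
  have hη' : cext J η = -(Complex.I • η) := hη
  have hζ' : cext J ζ = -(Complex.I • ζ) := hζ
  have e1 : nijGen (fun x y => C.bracC x y) (⇑(cext I)) (⇑(cext J)) ξ η =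
      Complex.I • cext I (C.bracC ξ η) + Complex.I • cext I (C.bracC ξ η)
        - Complex.I • C.bracC (cext I ξ) η - Complex.I • C.bracC ξ (cext I η)
        - cext J (C.bracC (cext I ξ) η) - cext J (C.bracC ξ (cext I η)) := by
    simp only [nijGen]
    rw [hξ', hη']
    simp only [map_neg, map_smul, LinearMap.neg_apply, LinearMap.smul_apply]
    rw [cIJ (C.bracC ξ η), cJI (C.bracC ξ η)]
    module
  rw [e1]
  simp only [map_add, map_sub, map_smul, LinearMap.add_apply, LinearMap.sub_apply,
    LinearMap.smul_apply, map_neg, LinearMap.neg_apply]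
  rw [cSkJ (C.bracC (cext I ξ) η) ζ, cSkJ (C.bracC ξ (cext I η)) ζ, hζ',
    cSkI (C.bracC ξ η) ζ]
  simp only [map_neg, map_smul, smul_neg, neg_neg]
  simp only [CourantAlgebroid.Omf]
  rw [OmS_skew C I K cSkI cSkK (C.bracC ξ η) ζ, OmS_eig I J K cIJ hξ',
    OmS_eig I J K cIJ hη', OmS_eig I J K cIJ hζ']
  rw [capC C ζ (cext I ξ) η, capC C η (cext I ξ) ζ, capC C ξ (cext I η) ζ]
  have hkey : C.pairC (C.bracC (cext I ξ) η) ζ =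
      C.pairC (C.bracC ζ (cext I ξ)) η + C.pairC (cext I ξ) (C.bracC ζ η)
        - C.pairC (C.bracC η (cext I ξ)) ζ := by
    have h1 := csbC C (cext I ξ) η ζ
    rw [capC C ζ (cext I ξ) η] at h1
    rw [← h1]
    abel
  rw [hkey]
  module
end
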